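/- If Σ_{k=0}^{∞} 1/‖D_k‖ = ∞, then for every z ∈ ℂ the set of sequences u : ℤ_+ → ℂ^l that satisfy the eigenvalue equation D_{n−1}u_{n−1} + D_n u_{n+1} + V_n u_n = z u_n for all n ≥ 1 and are square-summable (Σ_{n≥0} ‖u_n‖² < ∞) is a complex vector subspace of dimension at most l. -/

import Mathlib

open Matrix Filter

noncomputable section

/-- The complexification of a real matrix. -/
def cmat {l : ℕ} (A : Matrix (Fin l) (Fin l) ℝ) : Matrix (Fin l) (Fin l) ℂ :=
  A.map (Complex.ofReal)

/-- The operator norm of a real `l×l` matrix, i.e. the norm of the induced continuous linear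
map on Euclidean space. -/
def opNorm {l : ℕ} (A : Matrix (Fin l) (Fin l) ℝ) : ℝ :=
  ‖Matrix.toEuclideanCLM (𝕜 := ℝ) (n := Fin l) A‖

lemma entry_le_opNorm {l : ℕ} (A : Matrix (Fin l) (Fin l) ℝ) (i j : Fin l) :
    |A i j| ≤ opNorm A := by
  have h1 : Matrix.toEuclideanCLM (𝕜 := ℝ) (n := Fin l) A (EuclideanSpace.single j 1)
      = (WithLp.equiv 2 _).symm (A *ᵥ Pi.single j 1) := by
    rfl
  have h2 : ‖Matrix.toEuclideanCLM (𝕜 := ℝ) (n := Fin l) A (EuclideanSpace.single j 1)‖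
      ≤ opNorm A := by
    calc ‖Matrix.toEuclideanCLM (𝕜 := ℝ) (n := Fin l) A (EuclideanSpace.single j 1)‖
        ≤ opNorm A * ‖EuclideanSpace.single j (1:ℝ)‖ := ContinuousLinearMap.le_opNorm _ _
      _ = opNorm A := by rw [EuclideanSpace.norm_single]; simp
  rw [h1] at h2
  refine le_trans ?_ h2
  rw [EuclideanSpace.norm_eq]
  have : A i j = ((WithLp.equiv 2 _).symm (A *ᵥ Pi.single j 1) : EuclideanSpace ℝ (Fin l)) i := by
    simp [Matrix.mulVec_single]
  rw [this, ← Real.sqrt_sq_eq_abs]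
  apply Real.sqrt_le_sqrt
  have := Finset.single_le_sum (f := fun k => ‖((WithLp.equiv 2 _).symm (A *ᵥ Pi.single j 1)
    : EuclideanSpace ℝ (Fin l)) k‖ ^ 2) (fun k _ => by positivity) (Finset.mem_univ i)
  simpa [Real.norm_eq_abs, sq_abs] using this

lemma opNorm_nonneg' {l : ℕ} (A : Matrix (Fin l) (Fin l) ℝ) : 0 ≤ opNorm A :=
  norm_nonneg _

lemma dot_bound {l : ℕ} (A : Matrix (Fin l) (Fin l) ℝ) (x y : Fin l → ℂ) :
    ‖x ⬝ᵥ (cmat A *ᵥ y)‖ ≤ opNorm A * ((∑ i, ‖x i‖) * (∑ j, ‖y j‖)) := by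
  have hexp : x ⬝ᵥ (cmat A *ᵥ y) = ∑ i, ∑ j, x i * ((A i j : ℂ) * y j) := by
    simp [dotProduct, Matrix.mulVec, cmat, Finset.mul_sum]
  rw [hexp]
  calc ‖∑ i, ∑ j, x i * ((A i j : ℂ) * y j)‖
      ≤ ∑ i, ∑ j, ‖x i * ((A i j : ℂ) * y j)‖ := by
        refine (norm_sum_le _ _).trans (Finset.sum_le_sum fun i _ => norm_sum_le _ _)
    _ ≤ ∑ i, ∑ j, opNorm A * (‖x i‖ * ‖y j‖) := by
        refine Finset.sum_le_sum fun i _ => Finset.sum_le_sum fun j _ => ?_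
        rw [norm_mul, norm_mul]
        have h1 : ‖(A i j : ℂ)‖ ≤ opNorm A := by
          rw [Complex.norm_real, Real.norm_eq_abs]; exact entry_le_opNorm A i j
        calc ‖x i‖ * (‖(A i j : ℂ)‖ * ‖y j‖) = ‖(A i j : ℂ)‖ * (‖x i‖ * ‖y j‖) := by ring
          _ ≤ opNorm A * (‖x i‖ * ‖y j‖) := by
              apply mul_le_mul_of_nonneg_right h1; positivity
    _ = opNorm A * ((∑ i, ‖x i‖) * (∑ j, ‖y j‖)) := by
        rw [Finset.sum_mul_sum, Finset.mul_sum]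
        exact Finset.sum_congr rfl fun i _ => by rw [Finset.mul_sum]

lemma sum_mul_sum_le_q {l : ℕ} (x y : Fin l → ℂ) :
    (∑ i, ‖x i‖) * (∑ j, ‖y j‖) ≤ (l : ℝ) / 2 * ((∑ i, ‖x i‖ ^ 2) + ∑ j, ‖y j‖ ^ 2) := by
  have hx : (∑ i, ‖x i‖) ^ 2 ≤ (l : ℝ) * ∑ i, ‖x i‖ ^ 2 := by
    simpa using sq_sum_le_card_mul_sum_sq (s := Finset.univ) (f := fun i => ‖x i‖)
  have hy : (∑ j, ‖y j‖) ^ 2 ≤ (l : ℝ) * ∑ j, ‖y j‖ ^ 2 := by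
    simpa using sq_sum_le_card_mul_sum_sq (s := Finset.univ) (f := fun j => ‖y j‖)
  nlinarith [sq_nonneg ((∑ i, ‖x i‖) - ∑ j, ‖y j‖)]

lemma symm_dot {l : ℕ} {A : Matrix (Fin l) (Fin l) ℝ} (hA : A.IsSymm) (x y : Fin l → ℂ) :
    x ⬝ᵥ (cmat A *ᵥ y) = (cmat A *ᵥ x) ⬝ᵥ y := by
  have hsymm : (cmat A)ᵀ = cmat A := by
    unfold cmat
    rw [← Matrix.transpose_map]
    rw [Matrix.IsSymm] at hA
    rw [hA]
  rw [Matrix.dotProduct_mulVec, ← Matrix.mulVec_transpose, hsymm]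

lemma wronskian_const {l : ℕ} (D V : ℕ → Matrix (Fin l) (Fin l) ℝ)
    (hDsymm : ∀ n, (D n).IsSymm) (hVsymm : ∀ n, (V n).IsSymm) (z : ℂ)
    (u v : ℕ → Fin l → ℂ)
    (hu : ∀ n : ℕ, 1 ≤ n → cmat (D (n - 1)) *ᵥ u (n - 1) + cmat (D n) *ᵥ u (n + 1)
            + cmat (V n) *ᵥ u n = z • u n)
    (hv : ∀ n : ℕ, 1 ≤ n → cmat (D (n - 1)) *ᵥ v (n - 1) + cmat (D n) *ᵥ v (n + 1)
            + cmat (V n) *ᵥ v n = z • v n) (n : ℕ) :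
    u (n + 1) ⬝ᵥ (cmat (D n) *ᵥ v n) - v (n + 1) ⬝ᵥ (cmat (D n) *ᵥ u n)
      = u 1 ⬝ᵥ (cmat (D 0) *ᵥ v 0) - v 1 ⬝ᵥ (cmat (D 0) *ᵥ u 0) := by
  induction n with
  | zero => rfl
  | succ n ih =>
    rw [← ih]
    have hDu : cmat (D (n + 1)) *ᵥ u (n + 2) = z • u (n + 1)
        - cmat (V (n + 1)) *ᵥ u (n + 1) - cmat (D n) *ᵥ u n := by
      have h := hu (n + 1) (by omega)
      simp only [Nat.add_sub_cancel] at h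
      linear_combination (norm := module) h
    have hDv : cmat (D (n + 1)) *ᵥ v (n + 2) = z • v (n + 1)
        - cmat (V (n + 1)) *ᵥ v (n + 1) - cmat (D n) *ᵥ v n := by
      have h := hv (n + 1) (by omega)
      simp only [Nat.add_sub_cancel] at h
      linear_combination (norm := module) h
    have huv : u (n + 2) ⬝ᵥ (cmat (D (n + 1)) *ᵥ v (n + 1))
        = z * (u (n + 1) ⬝ᵥ v (n + 1)) - u (n + 1) ⬝ᵥ (cmat (V (n + 1)) *ᵥ v (n + 1))
          - v (n + 1) ⬝ᵥ (cmat (D n) *ᵥ u n) := by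
      rw [symm_dot (hDsymm (n + 1)), hDu]
      simp only [sub_dotProduct, smul_dotProduct]
      rw [← symm_dot (hVsymm (n + 1)), dotProduct_comm (cmat (D n) *ᵥ u n)]
      simp [smul_eq_mul]
    have hvu : v (n + 2) ⬝ᵥ (cmat (D (n + 1)) *ᵥ u (n + 1))
        = z * (v (n + 1) ⬝ᵥ u (n + 1)) - v (n + 1) ⬝ᵥ (cmat (V (n + 1)) *ᵥ u (n + 1))
          - u (n + 1) ⬝ᵥ (cmat (D n) *ᵥ v n) := by
      rw [symm_dot (hDsymm (n + 1)), hDv]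
      simp only [sub_dotProduct, smul_dotProduct]
      rw [← symm_dot (hVsymm (n + 1)), dotProduct_comm (cmat (D n) *ᵥ v n)]
      simp [smul_eq_mul]
    rw [huv, hvu, dotProduct_comm (v (n + 1)) (u (n + 1)),
      symm_dot (hVsymm (n + 1)) (u (n + 1)) (v (n + 1)),
      dotProduct_comm (cmat (V (n + 1)) *ᵥ u (n + 1)) (v (n + 1))]
    ring

lemma cmat_mulVec_injective {l : ℕ} {A : Matrix (Fin l) (Fin l) ℝ} (hA : IsUnit A.det) :
    Function.Injective (cmat A).mulVec := by
  apply Matrix.mulVec_injective_iff_isUnit.2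
  rw [Matrix.isUnit_iff_isUnit_det]
  have : (cmat A).det = (A.det : ℂ) := (RingHom.map_det Complex.ofRealHom A).symm
  rw [this, isUnit_iff_ne_zero]
  exact_mod_cast (isUnit_iff_ne_zero.mp hA)

lemma sol_unique {l : ℕ} (D V : ℕ → Matrix (Fin l) (Fin l) ℝ)
    (hDinv : ∀ n, IsUnit (D n).det) (z : ℂ) (u : ℕ → Fin l → ℂ)
    (hu : ∀ n : ℕ, 1 ≤ n → cmat (D (n - 1)) *ᵥ u (n - 1) + cmat (D n) *ᵥ u (n + 1)
            + cmat (V n) *ᵥ u n = z • u n)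
    (h0 : u 0 = 0) (h1 : u 1 = 0) : u = 0 := by
  have key : ∀ n, u n = 0 ∧ u (n + 1) = 0 := by
    intro n
    induction n with
    | zero => exact ⟨h0, h1⟩
    | succ n ih =>
      refine ⟨ih.2, ?_⟩
      have h := hu (n + 1) (by omega)
      simp only [Nat.add_sub_cancel, ih.1, ih.2, Matrix.mulVec_zero, smul_zero,
        zero_add, add_zero] at h
      have := cmat_mulVec_injective (hDinv (n + 1)) (a₁ := u (n + 2)) (a₂ := 0)
      simp only [Matrix.mulVec_zero] at this
      exact this h
  funext n
  exact (key n).1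

lemma wronskian_zero {l : ℕ} (D V : ℕ → Matrix (Fin l) (Fin l) ℝ)
    (hDsymm : ∀ n, (D n).IsSymm) (hVsymm : ∀ n, (V n).IsSymm)
    (hdiv : Tendsto (fun N : ℕ => ∑ k ∈ Finset.range N, (opNorm (D k))⁻¹) atTop atTop)
    (z : ℂ) (u v : ℕ → Fin l → ℂ)
    (hu : ∀ n : ℕ, 1 ≤ n → cmat (D (n - 1)) *ᵥ u (n - 1) + cmat (D n) *ᵥ u (n + 1)
            + cmat (V n) *ᵥ u n = z • u n)
    (hv : ∀ n : ℕ, 1 ≤ n → cmat (D (n - 1)) *ᵥ v (n - 1) + cmat (D n) *ᵥ v (n + 1)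
            + cmat (V n) *ᵥ v n = z • v n)
    (hus : Summable (fun n : ℕ => ∑ i, ‖u n i‖ ^ 2))
    (hvs : Summable (fun n : ℕ => ∑ i, ‖v n i‖ ^ 2)) :
    u 1 ⬝ᵥ (cmat (D 0) *ᵥ v 0) - v 1 ⬝ᵥ (cmat (D 0) *ᵥ u 0) = 0 := by
  set qu : ℕ → ℝ := fun n => ∑ i, ‖u n i‖ ^ 2 with hqu
  set qv : ℕ → ℝ := fun n => ∑ i, ‖v n i‖ ^ 2 with hqv
  set t : ℕ → ℝ := fun n => (l : ℝ) / 2 * ((qu (n + 1) + qv n) + (qv (n + 1) + qu n)) with ht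
  have hqu_nonneg : ∀ n, 0 ≤ qu n := fun n => Finset.sum_nonneg fun i _ => by positivity
  have hqv_nonneg : ∀ n, 0 ≤ qv n := fun n => Finset.sum_nonneg fun i _ => by positivity
  have ht_nonneg : ∀ n, 0 ≤ t n := fun n => by
    have := hqu_nonneg n; have := hqu_nonneg (n + 1)
    have := hqv_nonneg n; have := hqv_nonneg (n + 1)
    have hl2 : (0:ℝ) ≤ (l : ℝ) / 2 := by positivity
    simp only [ht]; nlinarith
  have hts : Summable t := by
    apply Summable.mul_left
    exact (((summable_nat_add_iff 1).2 hus).add hvs).add (((summable_nat_add_iff 1).2 hvs).add hus)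
  set c : ℝ := ‖u 1 ⬝ᵥ (cmat (D 0) *ᵥ v 0) - v 1 ⬝ᵥ (cmat (D 0) *ᵥ u 0)‖ with hc
  have hbound : ∀ n, c ≤ opNorm (D n) * t n := by
    intro n
    rw [hc, ← wronskian_const D V hDsymm hVsymm z u v hu hv n]
    calc ‖u (n + 1) ⬝ᵥ (cmat (D n) *ᵥ v n) - v (n + 1) ⬝ᵥ (cmat (D n) *ᵥ u n)‖
        ≤ ‖u (n + 1) ⬝ᵥ (cmat (D n) *ᵥ v n)‖ + ‖v (n + 1) ⬝ᵥ (cmat (D n) *ᵥ u n)‖ :=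
          norm_sub_le _ _
      _ ≤ opNorm (D n) * ((∑ i, ‖u (n+1) i‖) * (∑ j, ‖v n j‖))
          + opNorm (D n) * ((∑ i, ‖v (n+1) i‖) * (∑ j, ‖u n j‖)) :=
          add_le_add (dot_bound _ _ _) (dot_bound _ _ _)
      _ ≤ opNorm (D n) * ((l : ℝ) / 2 * (qu (n + 1) + qv n))
          + opNorm (D n) * ((l : ℝ) / 2 * (qv (n + 1) + qu n)) := by
          refine add_le_add ?_ ?_ <;>
            exact mul_le_mul_of_nonneg_left (sum_mul_sum_le_q _ _) (opNorm_nonneg' _)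
      _ = opNorm (D n) * t n := by rw [ht]; ring
  have hinv : ∀ n, (opNorm (D n))⁻¹ * c ≤ t n := by
    intro n
    have h1 : (opNorm (D n))⁻¹ * c ≤ (opNorm (D n))⁻¹ * (opNorm (D n) * t n) :=
      mul_le_mul_of_nonneg_left (hbound n) (inv_nonneg.mpr (opNorm_nonneg' _))
    refine h1.trans ?_
    rw [← mul_assoc]
    have h2 : (opNorm (D n))⁻¹ * opNorm (D n) ≤ 1 := by
      rcases eq_or_ne (opNorm (D n)) 0 with h | h
      · simp [h]
      · rw [inv_mul_cancel₀ h]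
    calc (opNorm (D n))⁻¹ * opNorm (D n) * t n ≤ 1 * t n :=
        mul_le_mul_of_nonneg_right h2 (ht_nonneg n)
      _ = t n := one_mul _
  by_contra hne
  have hcpos : 0 < c := by
    rw [hc]; exact norm_pos_iff.mpr hne
  have hT : ∀ N : ℕ, c * ∑ k ∈ Finset.range N, (opNorm (D k))⁻¹ ≤ ∑' n, t n := by
    intro N
    calc c * ∑ k ∈ Finset.range N, (opNorm (D k))⁻¹
        = ∑ k ∈ Finset.range N, (opNorm (D k))⁻¹ * c := by
          rw [Finset.mul_sum]; exact Finset.sum_congr rfl fun k _ => mul_comm _ _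
      _ ≤ ∑ k ∈ Finset.range N, t k := Finset.sum_le_sum fun k _ => hinv k
      _ ≤ ∑' n, t n := Summable.sum_le_tsum _ (fun k _ => ht_nonneg k) hts
  have htend : Tendsto (fun N : ℕ => c * ∑ k ∈ Finset.range N, (opNorm (D k))⁻¹) atTop atTop :=
    hdiv.const_mul_atTop hcpos
  obtain ⟨N, hN⟩ := (htend.eventually_gt_atTop (∑' n, t n)).exists
  exact absurd (hT N) (not_le.mpr hN)

def wform {l : ℕ} (D0 : Matrix (Fin l) (Fin l) ℝ) :
    LinearMap.BilinForm ℂ ((Fin l → ℂ) × (Fin l → ℂ)) :=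
  LinearMap.mk₂ ℂ
    (fun x y => x.2 ⬝ᵥ (cmat D0 *ᵥ y.1) - y.2 ⬝ᵥ (cmat D0 *ᵥ x.1))
    (by intro m m' n; simp [add_dotProduct, Matrix.mulVec_add, dotProduct_add]; ring)
    (by intro c m n; simp [smul_dotProduct, Matrix.mulVec_smul, dotProduct_smul,
          smul_eq_mul]; ring)
    (by intro m n n'; simp [add_dotProduct, Matrix.mulVec_add, dotProduct_add]; ring)
    (by intro c m n; simp [smul_dotProduct, Matrix.mulVec_smul, dotProduct_smul,
          smul_eq_mul]; ring)

lemma wform_apply {l : ℕ} (D0 : Matrix (Fin l) (Fin l) ℝ) (x y : (Fin l → ℂ) × (Fin l → ℂ)) :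
    wform D0 x y = x.2 ⬝ᵥ (cmat D0 *ᵥ y.1) - y.2 ⬝ᵥ (cmat D0 *ᵥ x.1) := rfl

lemma wform_isRefl {l : ℕ} (D0 : Matrix (Fin l) (Fin l) ℝ) : (wform D0).IsRefl := by
  have halt : (wform D0).IsAlt := fun x => sub_self _
  exact halt.isRefl

lemma wform_nondegenerate {l : ℕ} {D0 : Matrix (Fin l) (Fin l) ℝ} (hD0 : IsUnit D0.det) :
    (wform D0).Nondegenerate := by
  refine (LinearMap.IsRefl.nondegenerate_iff_separatingLeft (wform_isRefl D0)).2 ?_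
  intro x hx
  have hbu : ∀ y : Fin l → ℂ, x.2 ⬝ᵥ (cmat D0 *ᵥ y) = 0 := by
    intro y
    have := hx (y, 0)
    simpa [wform_apply] using this
  have hb : x.2 = 0 := by
    have hvm : x.2 ᵥ* cmat D0 = 0 := by
      apply dotProduct_eq_zero_iff.mp
      intro w
      rw [← Matrix.dotProduct_mulVec]
      exact hbu w
    have hinj : Function.Injective (Matrix.vecMul · (cmat D0)) := by
      apply Matrix.vecMul_injective_iff_isUnit.2
      rw [Matrix.isUnit_iff_isUnit_det]
      have : (cmat D0).det = (D0.det : ℂ) := (RingHom.map_det Complex.ofRealHom D0).symm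
      rw [this, isUnit_iff_ne_zero]
      exact_mod_cast (isUnit_iff_ne_zero.mp hD0)
    have h0 : (0 : Fin l → ℂ) ᵥ* cmat D0 = 0 := Matrix.zero_vecMul _
    exact hinj (hvm.trans h0.symm)
  have ha : x.1 = 0 := by
    have hMa : cmat D0 *ᵥ x.1 = 0 := by
      apply dotProduct_eq_zero_iff.mp
      intro w
      have := hx (0, w)
      rw [dotProduct_comm]
      simpa [wform_apply] using this
    have := cmat_mulVec_injective hD0 (a₁ := x.1) (a₂ := 0)
    simp only [Matrix.mulVec_zero] at this
    exact this hMa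
  exact Prod.ext ha hb

lemma isotropic_finrank_le {l : ℕ} {D0 : Matrix (Fin l) (Fin l) ℝ} (hD0 : IsUnit D0.det)
    (G : Submodule ℂ ((Fin l → ℂ) × (Fin l → ℂ)))
    (hG : G ≤ (wform D0).orthogonal G) : Module.finrank ℂ G ≤ l := by
  have h1 : Module.finrank ℂ G ≤ Module.finrank ℂ ((wform D0).orthogonal G) :=
    Submodule.finrank_mono hG
  have h2 := LinearMap.BilinForm.finrank_orthogonal (wform_nondegenerate hD0)
    G
  have h3 : Module.finrank ℂ ((Fin l → ℂ) × (Fin l → ℂ)) = l + l := by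
    simp [Module.finrank_prod]
  have h4 : Module.finrank ℂ G ≤ Module.finrank ℂ ((Fin l → ℂ) × (Fin l → ℂ)) :=
    Submodule.finrank_le G
  omega


def solSub (l : ℕ) (D V : ℕ → Matrix (Fin l) (Fin l) ℝ) (z : ℂ) :
    Submodule ℂ (ℕ → Fin l → ℂ) where
  carrier := {u : ℕ → Fin l → ℂ |
      (∀ n : ℕ, 1 ≤ n → cmat (D (n - 1)) *ᵥ u (n - 1) + cmat (D n) *ᵥ u (n + 1)
        + cmat (V n) *ᵥ u n = z • u n)
      ∧ Summable (fun n : ℕ => ∑ i, ‖u n i‖ ^ 2)}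
  add_mem' := by
    rintro u v ⟨hu, hus⟩ ⟨hv, hvs⟩
    refine ⟨fun n hn => ?_, ?_⟩
    · simp only [Pi.add_apply, Matrix.mulVec_add, smul_add]
      linear_combination (norm := module) hu n hn + hv n hn
    · apply Summable.of_nonneg_of_le
        (f := fun n => (2 * ∑ i, ‖u n i‖ ^ 2) + 2 * ∑ i, ‖v n i‖ ^ 2)
      · intro n
        exact Finset.sum_nonneg fun i _ => by positivity
      · intro n
        calc ∑ i, ‖(u + v) n i‖ ^ 2 ≤ ∑ i, (2 * ‖u n i‖ ^ 2 + 2 * ‖v n i‖ ^ 2) := by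
              refine Finset.sum_le_sum fun i _ => ?_
              have h := norm_add_le (u n i) (v n i)
              have h2 : ‖(u + v) n i‖ = ‖u n i + v n i‖ := rfl
              rw [h2]
              have h3 := mul_self_le_mul_self (norm_nonneg (u n i + v n i)) h
              nlinarith [h3, sq_nonneg (‖u n i‖ - ‖v n i‖)]
          _ = (2 * ∑ i, ‖u n i‖ ^ 2) + 2 * ∑ i, ‖v n i‖ ^ 2 := by
              rw [Finset.sum_add_distrib, ← Finset.mul_sum, ← Finset.mul_sum]
      · exact (hus.mul_left 2).add (hvs.mul_left 2)
  zero_mem' := by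
    refine ⟨fun n hn => by simp, ?_⟩
    simp only [Pi.zero_apply, norm_zero]
    simpa using summable_zero
  smul_mem' := by
    rintro c u ⟨hu, hus⟩
    refine ⟨fun n hn => ?_, ?_⟩
    · simp only [Pi.smul_apply, Matrix.mulVec_smul]
      have h := hu n hn
      linear_combination (norm := module) c • h
    · have : (fun n => ∑ i, ‖(c • u) n i‖ ^ 2) = fun n => ‖c‖ ^ 2 * ∑ i, ‖u n i‖ ^ 2 := by
        funext n
        simp only [Pi.smul_apply, Pi.smul_apply, norm_smul, mul_pow, Finset.mul_sum]
      rw [this]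
      exact hus.mul_left _

lemma mem_solSub {l : ℕ} {D V : ℕ → Matrix (Fin l) (Fin l) ℝ} {z : ℂ}
    {u : ℕ → Fin l → ℂ} : u ∈ solSub l D V z ↔
      (∀ n : ℕ, 1 ≤ n → cmat (D (n - 1)) *ᵥ u (n - 1) + cmat (D n) *ᵥ u (n + 1)
        + cmat (V n) *ᵥ u n = z • u n)
      ∧ Summable (fun n : ℕ => ∑ i, ‖u n i‖ ^ 2) := Iff.rfl


/-- If `Σ_{k=0}^∞ 1/‖D_k‖ = ∞`, then for every `z ∈ ℂ` the square-summable solutions of the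
eigenvalue equation form a complex subspace of dimension at most `l`. -/
theorem l2_solutions_rank_le (l : ℕ) (hl : 1 ≤ l)
    (D V : ℕ → Matrix (Fin l) (Fin l) ℝ)
    (hDsymm : ∀ n, (D n).IsSymm) (hVsymm : ∀ n, (V n).IsSymm)
    (hDinv : ∀ n, IsUnit (D n).det)
    (hdiv : Tendsto (fun N : ℕ => ∑ k ∈ Finset.range N, (opNorm (D k))⁻¹) atTop atTop)
    (z : ℂ) :
    ∃ S : Submodule ℂ (ℕ → Fin l → ℂ),
      (S : Set (ℕ → Fin l → ℂ)) =
        {u : ℕ → Fin l → ℂ |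
          (∀ n : ℕ, 1 ≤ n → cmat (D (n - 1)) *ᵥ u (n - 1) + cmat (D n) *ᵥ u (n + 1)
            + cmat (V n) *ᵥ u n = z • u n)
          ∧ Summable (fun n : ℕ => ∑ i, ‖u n i‖ ^ 2)} ∧
      Module.rank ℂ S ≤ (l : Cardinal) := by
  refine ⟨solSub l D V z, rfl, ?_⟩
  set S := solSub l D V z with hSdef
  set Φ : S →ₗ[ℂ] (Fin l → ℂ) × (Fin l → ℂ) :=
    { toFun := fun u => ((u : ℕ → Fin l → ℂ) 0, (u : ℕ → Fin l → ℂ) 1)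
      map_add' := fun u v => rfl
      map_smul' := fun c u => rfl } with hΦ
  have hinj : Function.Injective Φ := by
    rw [← LinearMap.ker_eq_bot, LinearMap.ker_eq_bot']
    intro u hu0
    have h0 : (u : ℕ → Fin l → ℂ) 0 = 0 := congrArg Prod.fst hu0
    have h1 : (u : ℕ → Fin l → ℂ) 1 = 0 := congrArg Prod.snd hu0
    have := sol_unique D V hDinv z (u : ℕ → Fin l → ℂ) (mem_solSub.mp u.2).1 h0 h1
    exact Subtype.ext this
  set G : Submodule ℂ ((Fin l → ℂ) × (Fin l → ℂ)) := LinearMap.range Φ with hG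
  have hGiso : G ≤ (wform (D 0)).orthogonal G := by
    rintro x ⟨u, rfl⟩
    rw [LinearMap.BilinForm.mem_orthogonal_iff]
    rintro y ⟨v, rfl⟩
    show wform (D 0) (Φ v) (Φ u) = 0
    rw [wform_apply]
    exact wronskian_zero D V hDsymm hVsymm hdiv z (v : ℕ → Fin l → ℂ) (u : ℕ → Fin l → ℂ)
      (mem_solSub.mp v.2).1 (mem_solSub.mp u.2).1 (mem_solSub.mp v.2).2 (mem_solSub.mp u.2).2
  haveI hfd : FiniteDimensional ℂ ((Fin l → ℂ) × (Fin l → ℂ)) := inferInstance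
  haveI : FiniteDimensional ℂ G := FiniteDimensional.finiteDimensional_submodule G
  have hfin : Module.finrank ℂ G ≤ l := isotropic_finrank_le (hDinv 0) G hGiso
  have heq : Module.rank ℂ S = Module.rank ℂ G :=
    (LinearEquiv.ofInjective Φ hinj).rank_eq
  rw [heq, ← Module.finrank_eq_rank]
  exact_mod_cast hfin
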